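/- arXiv:2111.08215 — 2 statements merged into one kernel-verified Lean document; each statement's English description precedes it below -/
import Mathlib

section
/- Define h : ℝ → ℝ by h(x) = (x − 5√x + 4)/24 − (√x/π)·(log(16x) + 2). Then h is monotonically increasing on the interval [10⁴, ∞). -/
open Real

/-- Auxiliary: derivative of the substituted function `g(t) = h(t²)`. -/
lemma g_hasDerivAt (t : ℝ) (ht : 0 < t) :
    HasDerivAt (fun t : ℝ => (t ^ 2 - 5 * t + 4) / 24
        - (t / Real.pi) * (Real.log (16 * t ^ 2) + 2))
      ((2 * t - 5) / 24 - (Real.log (16 * t ^ 2) + 4) / Real.pi) t := by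
  have h16 : (16 : ℝ) * t ^ 2 ≠ 0 := by positivity
  have hlog : HasDerivAt (fun t : ℝ => Real.log (16 * t ^ 2)) (2 / t) t := by
    have h1 : HasDerivAt (fun t : ℝ => 16 * t ^ 2) (16 * (2 * t)) t := by
      simpa using ((hasDerivAt_pow 2 t).const_mul (16 : ℝ))
    have h2 := (Real.hasDerivAt_log h16).comp t h1
    refine h2.congr_deriv ?_
    field_simp
  have hpoly : HasDerivAt (fun t : ℝ => (t ^ 2 - 5 * t + 4) / 24) ((2 * t - 5) / 24) t := by
    have : HasDerivAt (fun t : ℝ => t ^ 2 - 5 * t + 4) (2 * t - 5) t := by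
      have := (hasDerivAt_pow 2 t).sub ((hasDerivAt_id t).const_mul (5 : ℝ))
      simpa using this.add_const 4
    simpa using this.div_const 24
  have hmul : HasDerivAt (fun t : ℝ => (t / Real.pi) * (Real.log (16 * t ^ 2) + 2))
      ((1 / Real.pi) * (Real.log (16 * t ^ 2) + 2) + (t / Real.pi) * (2 / t)) t := by
    have hid : HasDerivAt (fun t : ℝ => t / Real.pi) (1 / Real.pi) t := by
      simpa using (hasDerivAt_id t).div_const Real.pi
    exact hid.mul (hlog.add_const 2)
  have := hpoly.sub hmul
  refine this.congr_deriv ?_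
  have hπ : Real.pi ≠ 0 := Real.pi_ne_zero
  field_simp
  ring

lemma g_deriv_pos (t : ℝ) (ht : 100 < t) :
    0 < (2 * t - 5) / 24 - (Real.log (16 * t ^ 2) + 4) / Real.pi := by
  have hπ : (3.14 : ℝ) < Real.pi := by linarith [Real.pi_gt_d6]
  have hπ0 : (0 : ℝ) < Real.pi := Real.pi_pos
  have hlog2 : Real.log 2 < 0.6931471808 := Real.log_two_lt_d9
  have hlog2' : (0:ℝ) < Real.log 2 := Real.log_pos (by norm_num)
  have hlog100 : Real.log 100 < 7 * Real.log 2 := by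
    calc Real.log 100 < Real.log 128 := Real.log_lt_log (by norm_num) (by norm_num)
    _ = 7 * Real.log 2 := by
        rw [show (128:ℝ) = 2 ^ 7 by norm_num, Real.log_pow]; push_cast; ring
  have hlogt : Real.log t ≤ t / 100 - 1 + Real.log 100 := by
    have h1 : Real.log (t / 100) ≤ t / 100 - 1 :=
      Real.log_le_sub_one_of_pos (by linarith)
    rw [Real.log_div (by linarith) (by norm_num)] at h1
    linarith
  have hL : Real.log (16 * t ^ 2) = 4 * Real.log 2 + 2 * Real.log t := by
    rw [Real.log_mul (by norm_num) (by positivity),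
      show (16:ℝ) = 2 ^ 4 by norm_num, Real.log_pow, Real.log_pow]
    push_cast; ring
  rw [sub_pos, div_lt_div_iff₀ hπ0 (by norm_num : (0:ℝ) < 24)]
  have key : (3.14 : ℝ) * (2 * t - 5) < Real.pi * (2 * t - 5) :=
    mul_lt_mul_of_pos_right hπ (by linarith)
  rw [hL]
  nlinarith [key, hlogt, hlog100, hlog2, ht]

lemma g_strictMonoOn :
    StrictMonoOn (fun t : ℝ => (t ^ 2 - 5 * t + 4) / 24
        - (t / Real.pi) * (Real.log (16 * t ^ 2) + 2)) (Set.Ici (100 : ℝ)) := by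
  apply strictMonoOn_of_deriv_pos (convex_Ici _)
  · intro t ht
    exact (g_hasDerivAt t (by simp at ht; linarith)).continuousAt.continuousWithinAt
  · intro t ht
    rw [interior_Ici] at ht
    rw [(g_hasDerivAt t (by linarith [Set.mem_Ioi.mp ht])).deriv]
    exact g_deriv_pos t ht

/-- `h(x) = (x − 5√x + 4)/24 − (√x/π)(log(16x) + 2)` is monotonically increasing
on `[10⁴, ∞)`. -/
theorem h_strictMonoOn :
    StrictMonoOn
      (fun x : ℝ => (x - 5 * Real.sqrt x + 4) / 24
        - (Real.sqrt x / Real.pi) * (Real.log (16 * x) + 2))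
      (Set.Ici (10 ^ 4 : ℝ)) := by
  have key : ∀ x : ℝ, (10 ^ 4 : ℝ) ≤ x →
      (x - 5 * Real.sqrt x + 4) / 24 - (Real.sqrt x / Real.pi) * (Real.log (16 * x) + 2)
      = (Real.sqrt x ^ 2 - 5 * Real.sqrt x + 4) / 24
        - (Real.sqrt x / Real.pi) * (Real.log (16 * Real.sqrt x ^ 2) + 2) := by
    intro x hx
    rw [Real.sq_sqrt (by linarith : (0:ℝ) ≤ x)]
  have hsqrt : ∀ x : ℝ, (10 ^ 4 : ℝ) ≤ x → (100 : ℝ) ≤ Real.sqrt x := by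
    intro x hx
    have : (100:ℝ) = Real.sqrt (10 ^ 4) := by
      rw [show (10:ℝ) ^ 4 = 100 ^ 2 by norm_num, Real.sqrt_sq (by norm_num)]
    rw [this]
    exact Real.sqrt_le_sqrt hx
  intro a ha b hb hab
  simp only [Set.mem_Ici] at ha hb
  simp only []
  rw [key a ha, key b hb]
  exact g_strictMonoOn (Set.mem_Ici.mpr (hsqrt a ha)) (Set.mem_Ici.mpr (hsqrt b hb))
    ((Real.sqrt_lt_sqrt (by linarith) hab))
end

section
/- Define h : ℝ → ℝ by h(x) = (x − 5√x + 4)/24 − (√x/π)·(log(16x) + 2), and let f(x) = h(180^x) − x. Then f is monotonically increasing on [2, ∞) and f(7) > 0; consequently, for every real r ≥ 7, h(180^r) > r. -/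
open Real

lemma log180_gt : 5 < Real.log 180 := by
  rw [Real.lt_log_iff_exp_lt (by norm_num)]
  have h1 : Real.exp 1 < 2.7182818286 := Real.exp_one_lt_d9
  have h2 : Real.exp 5 = Real.exp 1 ^ (5:ℕ) := by
    rw [← Real.exp_nat_mul]; norm_num
  have h0 : 0 < Real.exp 1 := Real.exp_pos 1
  rw [h2]; nlinarith [sq_nonneg (Real.exp 1), pow_pos h0 2, pow_pos h0 3, pow_pos h0 4]

lemma log180_lt : Real.log 180 < 5.2 := by
  rw [Real.log_lt_iff_lt_exp (by norm_num)]
  have h1 : (2.7182818283:ℝ) < Real.exp 1 := Real.exp_one_gt_d9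
  have h2 : (1/20:ℝ) + 1 ≤ Real.exp (1/20) := Real.add_one_le_exp _
  have h3 : Real.exp 5.2 = Real.exp 1 ^ (5:ℕ) * Real.exp (1/20) ^ (4:ℕ) := by
    rw [← Real.exp_nat_mul, ← Real.exp_nat_mul, ← Real.exp_add]; norm_num
  have h0 : 0 < Real.exp 1 := Real.exp_pos 1
  have h0' : 0 < Real.exp (1/20) := Real.exp_pos _
  rw [show (5.2:ℝ) = 26/5 by norm_num] at *
  rw [h3]
  nlinarith [pow_pos h0 2, pow_pos h0 3, pow_pos h0 4, pow_pos h0' 2, pow_pos h0' 3,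
    pow_le_pow_left₀ (by norm_num : (0:ℝ) ≤ 21/20) (by linarith : (21/20:ℝ) ≤ Real.exp (1/20)) 4,
    pow_le_pow_left₀ (by norm_num : (0:ℝ) ≤ 2.7182818283) h1.le 5]

lemma log16_lt : Real.log 16 < 2.7726 := by
  have h : (16:ℝ) = 2^(4:ℕ) := by norm_num
  rw [h, Real.log_pow]
  have := Real.log_two_lt_d9
  push_cast; nlinarith

lemma log16_pos : 0 < Real.log 16 := Real.log_pos (by norm_num)

lemma sqrt_rpow_eq (x : ℝ) : Real.sqrt ((180:ℝ) ^ x) = (180:ℝ) ^ (x/2) := by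
  rw [Real.sqrt_eq_rpow, ← Real.rpow_mul (by norm_num)]
  ring_nf

lemma log_term_eq (x : ℝ) : Real.log (16 * (180:ℝ) ^ x) = Real.log 16 + x * Real.log 180 := by
  rw [Real.log_mul (by norm_num) (ne_of_gt (Real.rpow_pos_of_pos (by norm_num) x)),
    Real.log_rpow (by norm_num)]

noncomputable def F (x : ℝ) : ℝ :=
  ((180:ℝ) ^ x - 5 * (180:ℝ) ^ (x/2) + 4) / 24
    - ((180:ℝ) ^ (x/2) / π) * (Real.log 16 + x * Real.log 180 + 2) - x

lemma f_eq_F (x : ℝ) :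
    (((180 : ℝ) ^ x - 5 * Real.sqrt ((180 : ℝ) ^ x) + 4) / 24
      - (Real.sqrt ((180 : ℝ) ^ x) / Real.pi)
          * (Real.log (16 * (180 : ℝ) ^ x) + 2)) - x = F x := by
  rw [sqrt_rpow_eq, log_term_eq]; rfl

noncomputable def F' (x : ℝ) : ℝ :=
  (Real.log 180 * (180:ℝ) ^ x - 5 * ((180:ℝ) ^ (x/2) * Real.log 180 / 2)) / 24
    - ((((180:ℝ) ^ (x/2) * Real.log 180 / 2) / π) * (Real.log 16 + x * Real.log 180 + 2)
        + ((180:ℝ) ^ (x/2) / π) * Real.log 180) - 1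

lemma hasDerivAt_F (x : ℝ) : HasDerivAt F (F' x) x := by
  have h180 : (0:ℝ) < 180 := by norm_num
  have h1 : HasDerivAt (fun x : ℝ => (180:ℝ) ^ x) ((180:ℝ) ^ x * Real.log 180) x :=
    (Real.hasStrictDerivAt_const_rpow h180 x).hasDerivAt
  have h2 : HasDerivAt (fun x : ℝ => (180:ℝ) ^ (x/2)) ((180:ℝ) ^ (x/2) * Real.log 180 / 2) x := by
    have := ((Real.hasStrictDerivAt_const_rpow h180 (x/2)).hasDerivAt.comp x
      ((hasDerivAt_id x).div_const 2))
    simpa [Function.comp_def, div_eq_mul_inv, mul_assoc] using this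
  have h3 : HasDerivAt (fun x : ℝ => Real.log 16 + x * Real.log 180 + 2) (Real.log 180) x := by
    simpa using (((hasDerivAt_id x).mul_const (Real.log 180)).const_add (Real.log 16)).add_const 2
  have h4 := (((h1.sub (h2.const_mul 5)).add_const 4).div_const 24).sub
    (((h2.div_const π).mul h3))
  have h5 := h4.sub (hasDerivAt_id x)
  refine (h5 : HasDerivAt F _ x).congr_deriv ?_
  unfold F'; ring

lemma v_lower {x : ℝ} (hx : 2 ≤ x) : 180 + 450 * (x - 2) ≤ (180:ℝ) ^ (x/2) := by
  have h1 : (180:ℝ) ^ (x/2) = Real.exp (Real.log 180 * (x/2)) :=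
    Real.rpow_def_of_pos (by norm_num) _
  have h2 : Real.log 180 * (x/2) = Real.log 180 + (Real.log 180 * (x/2) - Real.log 180) := by ring
  have h3 : Real.exp (Real.log 180) = 180 := Real.exp_log (by norm_num)
  have h4 : (Real.log 180 * (x/2) - Real.log 180) + 1 ≤
      Real.exp (Real.log 180 * (x/2) - Real.log 180) := Real.add_one_le_exp _
  have hL := log180_gt
  rw [h1, h2, Real.exp_add, h3]
  nlinarith [Real.exp_pos (Real.log 180 * (x/2) - Real.log 180)]

lemma vsq (x : ℝ) : ((180:ℝ) ^ (x/2)) ^ 2 = (180:ℝ) ^ x := by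
  rw [← Real.rpow_natCast ((180:ℝ)^(x/2)) 2, ← Real.rpow_mul (by norm_num)]
  norm_num

lemma arith_key {v L c x : ℝ} (hv0 : 0 < v) (hvlb : 180 + 450 * (x - 2) ≤ v)
    (hx : 2 < x) (hL1 : 5 < L) (hL2 : L < 5.2) (hc1 : 0 < c) (hc2 : c < 2.7726) :
    (L * v^2 - 5 * (v * L / 2)) / 24
      - (v * L / 2 * (c + x * L + 2) + v * L) / 3 - 1 > 0 := by
  have hb : c + x * L + 2 ≤ 4.7726 + 5.2 * x := by nlinarith
  have hbpos : (0:ℝ) < c + x * L + 2 := by nlinarith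
  have t0 : 5 * v^2 ≤ L * v^2 := by nlinarith [sq_nonneg v]
  have t1 : 5 * (v * L / 2) ≤ 13 * v := by nlinarith
  have t2 : v * L / 2 * (c + x * L + 2) ≤ 2.6 * v * (4.7726 + 5.2 * x) :=
    mul_le_mul (by nlinarith) hb hbpos.le (by positivity)
  have t3 : v * L ≤ 5.2 * v := by nlinarith
  have hvv : v * (180 + 450 * (x - 2)) ≤ v * v := mul_le_mul_of_nonneg_left hvlb hv0.le
  have hvx : v * 2 ≤ v * x := mul_le_mul_of_nonneg_left hx.le hv0.le
  have hv180 : (180:ℝ) ≤ v := by nlinarith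
  nlinarith [hvv, hvx, hv180, t0, t1, t2, t3]

lemma F'_pos {x : ℝ} (hx : 2 < x) : 0 < F' x := by
  have hv0 : 0 < (180:ℝ) ^ (x/2) := Real.rpow_pos_of_pos (by norm_num) _
  have hvlb : 180 + 450 * (x - 2) ≤ (180:ℝ) ^ (x/2) := v_lower hx.le
  have hu : (180:ℝ) ^ x = ((180:ℝ) ^ (x/2)) ^ 2 := (vsq x).symm
  have hπ1 : 3 ≤ π := by linarith [Real.pi_gt_three]
  have hπ0 : (0:ℝ) < π := Real.pi_pos
  have hF : F' x = (Real.log 180 * ((180:ℝ) ^ (x/2))^2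
        - 5 * ((180:ℝ) ^ (x/2) * Real.log 180 / 2)) / 24
      - ((180:ℝ) ^ (x/2) * Real.log 180 / 2 * (Real.log 16 + x * Real.log 180 + 2)
          + (180:ℝ) ^ (x/2) * Real.log 180) / π - 1 := by
    unfold F'; rw [hu]; ring
  have hAB : 0 ≤ (180:ℝ) ^ (x/2) * Real.log 180 / 2 * (Real.log 16 + x * Real.log 180 + 2)
      + (180:ℝ) ^ (x/2) * Real.log 180 := by
    have h1 : 0 < Real.log 16 + x * Real.log 180 + 2 := by
      nlinarith [log16_pos, log180_gt]
    have h2 : 0 < Real.log 180 := by linarith [log180_gt]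
    positivity
  have hdiv := div_le_div_of_nonneg_left hAB (show (0:ℝ) < 3 by norm_num) hπ1
  have key := arith_key hv0 hvlb hx log180_gt log180_lt log16_pos log16_lt
  rw [hF]
  linarith

lemma F_strictMonoOn : StrictMonoOn F (Set.Ici (2:ℝ)) := by
  apply strictMonoOn_of_deriv_pos (convex_Ici 2)
  · exact fun x _ => ((hasDerivAt_F x).continuousAt).continuousWithinAt
  · intro x hx
    rw [interior_Ici] at hx
    rw [(hasDerivAt_F x).deriv]
    exact F'_pos hx

lemma rpow_seven : (180:ℝ) ^ (7:ℝ) = 6122200320000000 := by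
  rw [show (7:ℝ) = ((7:ℕ):ℝ) by norm_num, Real.rpow_natCast]
  norm_num

lemma F_seven_pos : 0 < F 7 := by
  have hv0 : 0 < (180:ℝ) ^ ((7:ℝ)/2) := Real.rpow_pos_of_pos (by norm_num) _
  have hvsq : ((180:ℝ) ^ ((7:ℝ)/2)) ^ 2 = 6122200320000000 := by
    rw [vsq, rpow_seven]
  have hvub : (180:ℝ) ^ ((7:ℝ)/2) ≤ 78250000 := by nlinarith
  have hπ1 : 3 ≤ π := by linarith [Real.pi_gt_three]
  have hπ0 : (0:ℝ) < π := Real.pi_pos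
  have hlogpos : 0 < Real.log 16 + 7 * Real.log 180 + 2 := by
    nlinarith [log16_pos, log180_gt]
  have hlogub : Real.log 16 + 7 * Real.log 180 + 2 ≤ 41.1726 := by
    nlinarith [log16_lt, log180_lt]
  have hdiv : (180:ℝ) ^ ((7:ℝ)/2) / π ≤ (180:ℝ) ^ ((7:ℝ)/2) / 3 :=
    div_le_div_of_nonneg_left hv0.le (by norm_num) hπ1
  have ht : ((180:ℝ) ^ ((7:ℝ)/2) / π) * (Real.log 16 + 7 * Real.log 180 + 2)
      ≤ ((180:ℝ) ^ ((7:ℝ)/2) / 3) * 41.1726 :=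
    mul_le_mul hdiv hlogub hlogpos.le (by positivity)
  have hF : F 7 = ((180:ℝ) ^ (7:ℝ) - 5 * (180:ℝ) ^ ((7:ℝ)/2) + 4) / 24
      - ((180:ℝ) ^ ((7:ℝ)/2) / π) * (Real.log 16 + 7 * Real.log 180 + 2) - 7 := rfl
  rw [hF, rpow_seven]
  nlinarith

/-- With `h(x) = (x − 5√x + 4)/24 − (√x/π)(log(16x) + 2)` and
`f(x) = h(180^x) − x`, the function `f` is monotonically increasing on `[2, ∞)`
and `f(7) > 0`; consequently `h(180^r) > r` for all real `r ≥ 7`. -/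
theorem f_strictMonoOn_and_pos :
    StrictMonoOn
      (fun x : ℝ =>
        (((180 : ℝ) ^ x - 5 * Real.sqrt ((180 : ℝ) ^ x) + 4) / 24
          - (Real.sqrt ((180 : ℝ) ^ x) / Real.pi)
              * (Real.log (16 * (180 : ℝ) ^ x) + 2)) - x)
      (Set.Ici (2 : ℝ)) ∧
    (((180 : ℝ) ^ (7 : ℝ) - 5 * Real.sqrt ((180 : ℝ) ^ (7 : ℝ)) + 4) / 24
      - (Real.sqrt ((180 : ℝ) ^ (7 : ℝ)) / Real.pi)
          * (Real.log (16 * (180 : ℝ) ^ (7 : ℝ)) + 2)) - 7 > 0 ∧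
    ∀ r : ℝ, 7 ≤ r →
      (((180 : ℝ) ^ r - 5 * Real.sqrt ((180 : ℝ) ^ r) + 4) / 24
        - (Real.sqrt ((180 : ℝ) ^ r) / Real.pi)
            * (Real.log (16 * (180 : ℝ) ^ r) + 2)) > r := by
  have hfun : (fun x : ℝ =>
      (((180 : ℝ) ^ x - 5 * Real.sqrt ((180 : ℝ) ^ x) + 4) / 24
        - (Real.sqrt ((180 : ℝ) ^ x) / Real.pi)
            * (Real.log (16 * (180 : ℝ) ^ x) + 2)) - x) = F := funext f_eq_F
  refine ⟨by rw [hfun]; exact F_strictMonoOn, ?_, ?_⟩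
  · have := f_eq_F 7
    have := F_seven_pos
    linarith
  · intro r hr
    have hFr : 0 < F r := by
      rcases eq_or_lt_of_le hr with h | h
      · rw [← h]; exact F_seven_pos
      · exact lt_trans F_seven_pos
          (F_strictMonoOn (by norm_num : (7:ℝ) ∈ Set.Ici (2:ℝ))
            (by simp only [Set.mem_Ici]; linarith) h)
    have := f_eq_F r
    linarith
end
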